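/- The ratio \(\beta(K_m)/\gamma(K_m)\) of the second moment to the third absolute moment of the Fejér kernel converges as \(m\to\infty\) to the positive constant \(\frac{4\log 2}{6\pi\log 2 - 21\zeta(3)/\pi}\). -/

import Mathlib

open Finset Filter Real

lemma cos_nat_pi (k : ℕ) : Real.cos (k * π) = (-1) ^ k := by
  simpa using Real.cos_nat_mul_pi_sub 0 k

lemma hasDerivAt_sin_mul (c x : ℝ) :
    HasDerivAt (fun y => Real.sin (c * y)) (c * Real.cos (c * x)) x := by
  simpa [mul_comm, Function.comp_def] using (Real.hasDerivAt_sin (c * x)).comp x ((hasDerivAt_id x).const_mul c)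

lemma hasDerivAt_cos_mul (c x : ℝ) :
    HasDerivAt (fun y => Real.cos (c * y)) (-(c * Real.sin (c * x))) x := by
  have := (Real.hasDerivAt_cos (c * x)).comp x ((hasDerivAt_id x).const_mul c)
  refine this.congr_deriv ?_
  ring

lemma integral_sq_cos (k : ℕ) (hk : k ≠ 0) :
    ∫ y in (-π)..π, y ^ 2 * Real.cos (k * y) = 4 * π * (-1) ^ k / k ^ 2 := by
  set c : ℝ := (k : ℝ) with hc
  have hc0 : c ≠ 0 := Nat.cast_ne_zero.mpr hk
  have hN : ∀ x : ℝ, HasDerivAt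
      (fun y => (c ^ 2 * (y ^ 2 * Real.sin (c * y)) + 2 * c * (y * Real.cos (c * y))
        - 2 * Real.sin (c * y)) / c ^ 3) (x ^ 2 * Real.cos (c * x)) x := by
    intro x
    have h1 : HasDerivAt (fun y : ℝ => y ^ 2) (2 * x) x := by
      simpa using hasDerivAt_pow 2 x
    have h := ((((h1.mul (hasDerivAt_sin_mul c x)).const_mul (c ^ 2)).add
        (((hasDerivAt_id x).mul (hasDerivAt_cos_mul c x)).const_mul (2 * c))).sub
        ((hasDerivAt_sin_mul c x).const_mul 2)).div_const (c ^ 3)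
    refine h.congr_deriv ?_
    simp only [id]
    field_simp
    ring
  have hint : IntervalIntegrable (fun y => y ^ 2 * Real.cos (c * y)) MeasureTheory.volume (-π) π :=
    (Continuous.intervalIntegrable (by fun_prop)) _ _
  have := intervalIntegral.integral_eq_sub_of_hasDerivAt (fun x _ => hN x) hint
  rw [this]
  have hs : Real.sin (c * π) = 0 := by rw [hc]; exact Real.sin_nat_mul_pi k
  have hs' : Real.sin (c * -π) = 0 := by rw [mul_neg, Real.sin_neg, hs, neg_zero]
  have hcos : Real.cos (c * π) = (-1) ^ k := by rw [hc]; exact cos_nat_pi k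
  have hcos' : Real.cos (c * -π) = (-1) ^ k := by rw [mul_neg, Real.cos_neg, hcos]
  rw [hs, hs', hcos, hcos']
  field_simp
  ring

lemma integral_even_reduce (f : ℝ → ℝ) (hf : ∀ x, f (-x) = f x) (hc : Continuous f) :
    ∫ y in (-π)..π, f y = 2 * ∫ y in (0:ℝ)..π, f y := by
  have h1 : IntervalIntegrable f MeasureTheory.volume (-π) 0 := hc.intervalIntegrable _ _
  have h2 : IntervalIntegrable f MeasureTheory.volume 0 π := hc.intervalIntegrable _ _
  rw [← intervalIntegral.integral_add_adjacent_intervals h1 h2]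
  have : ∫ y in (-π)..(0:ℝ), f y = ∫ y in (0:ℝ)..π, f y := by
    have := intervalIntegral.integral_comp_neg (a := (0:ℝ)) (b := π) f
    simp only [hf, neg_zero] at this
    rw [this]
  rw [this]; ring

lemma integral_cube_cos (k : ℕ) (hk : k ≠ 0) :
    ∫ y in (0:ℝ)..π, y ^ 3 * Real.cos (k * y)
      = 3 * π ^ 2 * (-1) ^ k / k ^ 2 + 6 * (1 - (-1) ^ k) / k ^ 4 := by
  set c : ℝ := (k : ℝ) with hc
  have hc0 : c ≠ 0 := Nat.cast_ne_zero.mpr hk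
  have hN : ∀ x : ℝ, HasDerivAt
      (fun y => (c ^ 3 * (y ^ 3 * Real.sin (c * y)) + 3 * c ^ 2 * (y ^ 2 * Real.cos (c * y))
        - 6 * c * (y * Real.sin (c * y)) - 6 * Real.cos (c * y)) / c ^ 4)
      (x ^ 3 * Real.cos (c * x)) x := by
    intro x
    have h1 : HasDerivAt (fun y : ℝ => y ^ 3) (3 * x ^ 2) x := by
      simpa using hasDerivAt_pow 3 x
    have h2 : HasDerivAt (fun y : ℝ => y ^ 2) (2 * x) x := by
      simpa using hasDerivAt_pow 2 x
    have h := (((((h1.mul (hasDerivAt_sin_mul c x)).const_mul (c ^ 3)).add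
        (((h2.mul (hasDerivAt_cos_mul c x))).const_mul (3 * c ^ 2))).sub
        (((hasDerivAt_id x).mul (hasDerivAt_sin_mul c x)).const_mul (6 * c))).sub
        ((hasDerivAt_cos_mul c x).const_mul 6)).div_const (c ^ 4)
    refine h.congr_deriv ?_
    simp only [id]
    field_simp
    ring
  have hint : IntervalIntegrable (fun y => y ^ 3 * Real.cos (c * y)) MeasureTheory.volume 0 π :=
    (Continuous.intervalIntegrable (by fun_prop)) _ _
  have := intervalIntegral.integral_eq_sub_of_hasDerivAt (fun x _ => hN x) hint
  rw [this]
  have hs : Real.sin (c * π) = 0 := by rw [hc]; exact Real.sin_nat_mul_pi k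
  have hcos : Real.cos (c * π) = (-1) ^ k := by rw [hc]; exact cos_nat_pi k
  rw [hs, hcos, show c * 0 = 0 by ring, Real.cos_zero]
  field_simp
  ring

lemma integral_abs_cube_cos (k : ℕ) (hk : k ≠ 0) :
    ∫ y in (-π)..π, |y| ^ 3 * Real.cos (k * y)
      = 6 * π ^ 2 * (-1) ^ k / k ^ 2 + 12 * (1 - (-1) ^ k) / k ^ 4 := by
  have heven : ∀ x : ℝ, |(-x)| ^ 3 * Real.cos (k * (-x)) = |x| ^ 3 * Real.cos (k * x) := by
    intro x; rw [abs_neg, mul_neg, Real.cos_neg]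
  rw [integral_even_reduce _ heven (by fun_prop)]
  have : ∫ y in (0:ℝ)..π, |y| ^ 3 * Real.cos (k * y)
      = ∫ y in (0:ℝ)..π, y ^ 3 * Real.cos (k * y) := by
    apply intervalIntegral.integral_congr
    intro x hx
    rw [Set.uIcc_of_le Real.pi_pos.le] at hx
    simp only
    rw [abs_of_nonneg hx.1]
  rw [this, integral_cube_cos k hk]
  ring

lemma integral_sq : ∫ y in (-π)..π, y ^ 2 = 2 * π ^ 3 / 3 := by
  rw [integral_pow]
  ring

lemma integral_abs_cube : ∫ y in (-π)..π, |y| ^ 3 = π ^ 4 / 2 := by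
  have heven : ∀ x : ℝ, |(-x)| ^ 3 = |x| ^ 3 := by intro x; rw [abs_neg]
  rw [integral_even_reduce _ heven (by fun_prop)]
  have : ∫ y in (0:ℝ)..π, |y| ^ 3 = ∫ y in (0:ℝ)..π, y ^ 3 := by
    apply intervalIntegral.integral_congr
    intro x hx
    rw [Set.uIcc_of_le Real.pi_pos.le] at hx
    simp only
    rw [abs_of_nonneg hx.1]
  rw [this, integral_pow]
  ring

noncomputable def fejerKernel (m : ℕ) (s : ℝ) : ℝ :=
  1 / (2 * Real.pi) +
    (1 / Real.pi) * ∑ k ∈ Finset.Icc 1 m, (1 - (k : ℝ) / (m + 1)) * Real.cos (k * s)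

noncomputable def zeta3 : ℝ := ∑' n : ℕ, 1 / ((n : ℝ) + 1) ^ 3

lemma fejer_integral_eq (m : ℕ) (g : ℝ → ℝ) (hg : Continuous g)
    (IC : ℝ) (h0 : ∫ y in (-π)..π, g y = IC)
    (I : ℕ → ℝ) (hI : ∀ k : ℕ, k ≠ 0 → ∫ y in (-π)..π, g y * Real.cos ((k : ℝ) * y) = I k) :
    ∫ y in (-π)..π, g y * fejerKernel m y
      = IC / (2 * π) + (1 / π) * ∑ k ∈ Finset.Icc 1 m, (1 - (k : ℝ) / (m + 1)) * I k := by
  have hfun : ∀ y, g y * fejerKernel m y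
      = g y * (1 / (2 * π)) + ∑ k ∈ Finset.Icc 1 m,
          (1 / π) * ((1 - (k : ℝ) / (m + 1)) * (g y * Real.cos (k * y))) := by
    intro y
    rw [fejerKernel, mul_add, Finset.mul_sum, Finset.mul_sum]
    congr 1
    apply Finset.sum_congr rfl
    intro k _
    ring
  have hcont : ∀ k : ℕ, Continuous fun y : ℝ => Real.cos ((k : ℝ) * y) := fun k =>
    Real.continuous_cos.comp (continuous_const.mul continuous_id)
  simp only [hfun]
  rw [intervalIntegral.integral_add, intervalIntegral.integral_finset_sum]
  · rw [intervalIntegral.integral_mul_const, h0]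
    congr 1
    · ring
    · rw [Finset.mul_sum]
      apply Finset.sum_congr rfl
      intro k hk
      rw [Finset.mem_Icc] at hk
      rw [intervalIntegral.integral_const_mul, intervalIntegral.integral_const_mul,
        hI k (by omega)]
  · intro k _
    exact ((continuous_const.mul (continuous_const.mul (hg.mul (hcont k)))).intervalIntegrable) _ _
  · exact ((hg.mul continuous_const).intervalIntegrable) _ _
  · exact ((continuous_finset_sum _ (fun k _ =>
      continuous_const.mul (continuous_const.mul (hg.mul (hcont k))))).intervalIntegrable) _ _

lemma a_eq (m : ℕ) :
    ∫ y in (-π)..π, y ^ 2 * fejerKernel m y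
      = π ^ 2 / 3 + ∑ k ∈ Finset.Icc 1 m,
          (1 - (k : ℝ) / (m + 1)) * (4 * (-1) ^ k / k ^ 2) := by
  have hpi := Real.pi_ne_zero
  rw [fejer_integral_eq m (fun y => y ^ 2) (by fun_prop) (2 * π ^ 3 / 3) integral_sq
      (fun k => 4 * π * (-1) ^ k / k ^ 2) (fun k hk => integral_sq_cos k hk),
    Finset.mul_sum, show 2 * π ^ 3 / 3 / (2 * π) = π ^ 2 / 3 by field_simp]
  congr 1
  apply Finset.sum_congr rfl
  intro k hk
  rw [Finset.mem_Icc] at hk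
  have hk0 : (k : ℝ) ≠ 0 := Nat.cast_ne_zero.mpr (by omega)
  have hm : (m : ℝ) + 1 ≠ 0 := by positivity
  field_simp

lemma b_eq (m : ℕ) :
    ∫ y in (-π)..π, |y| ^ 3 * fejerKernel m y
      = π ^ 3 / 4 + ∑ k ∈ Finset.Icc 1 m,
          (1 - (k : ℝ) / (m + 1)) *
            (6 * π * (-1) ^ k / k ^ 2 + (12 / π) * (1 - (-1) ^ k) / k ^ 4) := by
  have hpi := Real.pi_ne_zero
  rw [fejer_integral_eq m (fun y => |y| ^ 3) (by fun_prop) (π ^ 4 / 2) integral_abs_cube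
      (fun k => 6 * π ^ 2 * (-1) ^ k / k ^ 2 + 12 * (1 - (-1) ^ k) / k ^ 4)
      (fun k hk => integral_abs_cube_cos k hk),
    Finset.mul_sum, show π ^ 4 / 2 / (2 * π) = π ^ 3 / 4 by field_simp; ring]
  congr 1
  apply Finset.sum_congr rfl
  intro k hk
  rw [Finset.mem_Icc] at hk
  have hk0 : (k : ℝ) ≠ 0 := Nat.cast_ne_zero.mpr (by omega)
  have hm : (m : ℝ) + 1 ≠ 0 := by positivity
  field_simp

lemma sum_Icc_one (f : ℕ → ℝ) (m : ℕ) :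
    ∑ k ∈ Finset.Icc 1 m, f k = ∑ i ∈ Finset.range m, f (i + 1) := by
  induction m with
  | zero => simp
  | succ n ih => rw [Finset.sum_Icc_succ_top (by omega), ih, Finset.sum_range_succ]

lemma alt_bound {f : ℕ → ℝ} {l : ℝ} (hfa : Antitone f) (hf0 : ∀ n, 0 ≤ f n)
    (hfl : Tendsto (fun n => ∑ i ∈ Finset.range n, (-1) ^ i * f i) atTop (nhds l)) (n : ℕ) :
    |l - ∑ i ∈ Finset.range n, (-1) ^ i * f i| ≤ f n := by
  rcases Nat.even_or_odd n with he | ho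
  · obtain ⟨k, hk⟩ := he
    have hn : n = 2 * k := by omega
    subst hn
    have hlow := Antitone.alternating_series_le_tendsto hfl hfa k
    have hup := Antitone.tendsto_le_alternating_series hfl hfa k
    rw [Finset.sum_range_succ] at hup
    have hpow : ((-1 : ℝ)) ^ (2 * k) = 1 := by
      rw [pow_mul]; norm_num
    rw [hpow, one_mul] at hup
    rw [abs_le]
    constructor
    · have := hf0 (2 * k); linarith
    · linarith
  · obtain ⟨k, hk⟩ := ho
    subst hk
    have hup := Antitone.tendsto_le_alternating_series hfl hfa k
    have hlow := Antitone.alternating_series_le_tendsto hfl hfa (k + 1)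
    have h2 : 2 * (k + 1) = (2 * k + 1) + 1 := by ring
    rw [h2, Finset.sum_range_succ] at hlow
    have hpow : ((-1 : ℝ)) ^ (2 * k + 1) = -1 := by
      rw [pow_succ, pow_mul]; norm_num
    rw [hpow, neg_one_mul] at hlow
    rw [abs_le]
    constructor
    · linarith
    · have := hf0 (2 * k + 1); linarith

lemma antitone_inv_succ : Antitone (fun i : ℕ => 1 / ((i : ℝ) + 1)) := by
  intro a b hab
  apply one_div_le_one_div_of_le (by positivity)
  have : (a : ℝ) ≤ b := Nat.cast_le.mpr hab
  linarith

lemma antitone_inv_succ_sq : Antitone (fun i : ℕ => 1 / ((i : ℝ) + 1) ^ 2) := by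
  intro a b hab
  apply one_div_le_one_div_of_le (by positivity)
  have : (a : ℝ) ≤ b := Nat.cast_le.mpr hab
  nlinarith

lemma tendsto_inv_succ : Tendsto (fun i : ℕ => 1 / ((i : ℝ) + 1)) atTop (nhds 0) :=
  tendsto_one_div_add_atTop_nhds_zero_nat

lemma alt_harmonic_even (n : ℕ) :
    ∑ i ∈ Finset.range (2 * n), (-1) ^ i * (1 / ((i : ℝ) + 1))
      = (harmonic (2 * n) : ℝ) - (harmonic n : ℝ) := by
  induction n with
  | zero => simp
  | succ n ih =>
    have h2 : 2 * (n + 1) = (2 * n + 1) + 1 := by ring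
    rw [h2, Finset.sum_range_succ, Finset.sum_range_succ, ih]
    have hp1 : ((-1 : ℝ)) ^ (2 * n) = 1 := by rw [pow_mul]; norm_num
    have hp2 : ((-1 : ℝ)) ^ (2 * n + 1) = -1 := by rw [pow_succ, pow_mul]; norm_num
    rw [hp1, hp2]
    rw [show (2 * n + 1) + 1 = 2 * n + 2 from rfl]
    have e1 : harmonic (2 * n + 2) = harmonic (2 * n) + (↑(2 * n + 1))⁻¹ + (↑(2 * n + 2))⁻¹ := by
      rw [harmonic_succ, harmonic_succ]
    have e2 : harmonic (n + 1) = harmonic n + (↑(n + 1))⁻¹ := harmonic_succ n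
    rw [e1, e2]
    push_cast
    have h1 : (2 * (n : ℝ) + 1) ≠ 0 := by positivity
    have h2' : (2 * (n : ℝ) + 2) ≠ 0 := by positivity
    have h3 : ((n : ℝ) + 1) ≠ 0 := by positivity
    field_simp
    ring

lemma tendsto_two_mul : Tendsto (fun n : ℕ => 2 * n) atTop atTop :=
  tendsto_atTop_mono (fun n => by simp; omega) tendsto_id

lemma tendsto_harmonic_diff :
    Tendsto (fun n : ℕ => (harmonic (2 * n) : ℝ) - (harmonic n : ℝ)) atTop
      (nhds (Real.log 2)) := by
  have h1 := Real.tendsto_harmonic_sub_log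
  have h2 : Tendsto (fun n : ℕ => (harmonic (2 * n) : ℝ) - Real.log ((2 * n : ℕ) : ℝ)) atTop
      (nhds Real.eulerMascheroniConstant) := h1.comp tendsto_two_mul
  have h3 : Tendsto (fun n : ℕ =>
      ((harmonic (2 * n) : ℝ) - Real.log ((2 * n : ℕ) : ℝ)) - ((harmonic n : ℝ) - Real.log n)
        + Real.log 2) atTop (nhds (Real.log 2)) := by
    have := (h2.sub h1).add (tendsto_const_nhds (x := Real.log 2))
    simpa using this
  apply h3.congr'
  filter_upwards [eventually_ne_atTop 0] with n hn
  have hn0 : (n : ℝ) ≠ 0 := Nat.cast_ne_zero.mpr hn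
  have hlog : Real.log ((2 * n : ℕ) : ℝ) = Real.log 2 + Real.log n := by
    push_cast
    rw [Real.log_mul (by norm_num) hn0]
  rw [hlog]
  ring

lemma tendsto_alt_harmonic :
    Tendsto (fun n => ∑ i ∈ Finset.range n, (-1) ^ i * (1 / ((i : ℝ) + 1))) atTop
      (nhds (Real.log 2)) := by
  obtain ⟨l, hl⟩ := Antitone.tendsto_alternating_series_of_tendsto_zero
    antitone_inv_succ tendsto_inv_succ
  have hsub : Tendsto (fun n : ℕ =>
      ∑ i ∈ Finset.range (2 * n), (-1) ^ i * (1 / ((i : ℝ) + 1))) atTop (nhds l) :=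
    hl.comp tendsto_two_mul
  have hsub2 : Tendsto (fun n : ℕ =>
      ∑ i ∈ Finset.range (2 * n), (-1) ^ i * (1 / ((i : ℝ) + 1))) atTop
      (nhds (Real.log 2)) := by
    apply tendsto_harmonic_diff.congr
    intro n
    rw [alt_harmonic_even]
  rwa [tendsto_nhds_unique hsub hsub2] at hl

lemma hasSum_even_part (p : ℕ) (S : ℝ) (h : HasSum (fun n : ℕ => 1 / (n : ℝ) ^ p) S) :
    HasSum (fun n : ℕ => (1 + (-1) ^ n) / (n : ℝ) ^ p) (2 / 2 ^ p * S) := by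
  have hinj : Function.Injective (fun n : ℕ => 2 * n) := fun a b hab => by
    simp only [] at hab; omega
  have hvan : ∀ x ∉ Set.range (fun n : ℕ => 2 * n),
      (1 + (-1 : ℝ) ^ x) / (x : ℝ) ^ p = 0 := by
    intro x hx
    have hodd : Odd x := by
      rcases Nat.even_or_odd x with he | ho
      · exfalso; obtain ⟨r, hr⟩ := he; exact hx ⟨r, show 2 * r = x by omega⟩
      · exact ho
    rw [hodd.neg_one_pow]
    norm_num
  rw [← Function.Injective.hasSum_iff hinj hvan]
  have hfun : ((fun n : ℕ => (1 + (-1 : ℝ) ^ n) / (n : ℝ) ^ p) ∘ (fun n : ℕ => 2 * n))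
      = fun n : ℕ => (2 / 2 ^ p) * (1 / (n : ℝ) ^ p) := by
    funext n
    simp only [Function.comp]
    have h1 : ((-1 : ℝ)) ^ (2 * n) = 1 := by rw [pow_mul]; norm_num
    rw [h1]
    push_cast
    rw [mul_pow, div_mul_div_comm]
    norm_num
  rw [hfun]
  exact h.mul_left _

lemma hasSum_P : HasSum (fun n : ℕ => (-1) ^ n / (n : ℝ) ^ 2) (-(π ^ 2 / 12)) := by
  have h := (hasSum_even_part 2 _ hasSum_zeta_two).sub hasSum_zeta_two
  have hfun : (fun n : ℕ => (1 + (-1 : ℝ) ^ n) / (n : ℝ) ^ 2 - 1 / (n : ℝ) ^ 2)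
      = fun n : ℕ => (-1 : ℝ) ^ n / (n : ℝ) ^ 2 := by
    funext n
    rw [div_sub_div_same]
    congr 1
    ring
  rw [hfun] at h
  convert h using 1
  · rfl
  ring

lemma hasSum_zeta3 : HasSum (fun n : ℕ => 1 / (n : ℝ) ^ 3) zeta3 := by
  have hsum : Summable (fun n : ℕ => 1 / (n : ℝ) ^ 3) := by
    rw [summable_one_div_nat_pow]; norm_num
  have h := hsum.hasSum
  have heq : ∑' n : ℕ, 1 / (n : ℝ) ^ 3 = zeta3 := by
    have h1 := hsum.sum_add_tsum_nat_add 1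
    rw [Finset.sum_range_one] at h1
    norm_num at h1
    rw [zeta3]
    simp only [one_div]
    rw [← h1]
  rwa [heq] at h

lemma hasSum_W : HasSum (fun n : ℕ => (1 - (-1) ^ n) / (n : ℝ) ^ 3) (7 * zeta3 / 4) := by
  have h := (hasSum_zeta3.mul_left 2).sub (hasSum_even_part 3 _ hasSum_zeta3)
  have hfun : (fun n : ℕ => 2 * (1 / (n : ℝ) ^ 3) - (1 + (-1 : ℝ) ^ n) / (n : ℝ) ^ 3)
      = fun n : ℕ => (1 - (-1 : ℝ) ^ n) / (n : ℝ) ^ 3 := by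
    funext n
    rw [mul_one_div, div_sub_div_same]
    congr 1
    ring
  rw [hfun] at h
  convert h using 1
  · rfl
  ring

lemma hasSum_R : HasSum (fun n : ℕ => (1 - (-1) ^ n) / (n : ℝ) ^ 4) (π ^ 4 / 48) := by
  have h := (hasSum_zeta_four.mul_left 2).sub (hasSum_even_part 4 _ hasSum_zeta_four)
  have hfun : (fun n : ℕ => 2 * (1 / (n : ℝ) ^ 4) - (1 + (-1 : ℝ) ^ n) / (n : ℝ) ^ 4)
      = fun n : ℕ => (1 - (-1 : ℝ) ^ n) / (n : ℝ) ^ 4 := by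
    funext n
    rw [mul_one_div, div_sub_div_same]
    congr 1
    ring
  rw [hfun] at h
  convert h using 1
  · rfl
  ring

lemma hasSum_zeta2_shift : HasSum (fun n : ℕ => 1 / ((n : ℝ) + 1) ^ 2) (π ^ 2 / 6) := by
  have h : HasSum (fun n : ℕ => 1 / ((n + 1 : ℕ) : ℝ) ^ 2) (π ^ 2 / 6) := by
    apply (hasSum_nat_add_iff (f := fun n : ℕ => 1 / (n : ℝ) ^ 2) 1).mpr
    simpa using hasSum_zeta_two
  have hfun : (fun n : ℕ => 1 / ((n + 1 : ℕ) : ℝ) ^ 2) = fun n : ℕ => 1 / ((n : ℝ) + 1) ^ 2 := by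
    funext n; push_cast; ring
  rwa [hfun] at h

lemma tendsto_S2 :
    Tendsto (fun n => ∑ i ∈ Finset.range n, (-1) ^ i * (1 / ((i : ℝ) + 1) ^ 2)) atTop
      (nhds (π ^ 2 / 12)) := by
  have hT := hasSum_P.tendsto_sum_nat
  have hT1 : Tendsto (fun n : ℕ => ∑ i ∈ Finset.range (n + 1), (-1) ^ i / ((i : ℝ)) ^ 2) atTop
      (nhds (-(π ^ 2 / 12))) := hT.comp (tendsto_add_atTop_nat 1)
  have heq : ∀ n : ℕ, ∑ i ∈ Finset.range (n + 1), (-1) ^ i / ((i : ℝ)) ^ 2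
      = -∑ i ∈ Finset.range n, (-1) ^ i * (1 / ((i : ℝ) + 1) ^ 2) := by
    intro n
    rw [Finset.sum_range_succ']
    simp only [Nat.cast_zero]
    norm_num
    rw [← Finset.sum_neg_distrib]
    apply Finset.sum_congr rfl
    intro i _
    push_cast
    rw [pow_succ]
    ring
  simp only [heq] at hT1
  have := hT1.neg
  simpa using this

lemma P_bound (m : ℕ) :
    |π ^ 2 / 12 + ∑ k ∈ Finset.Icc 1 m, (-1) ^ k / (k : ℝ) ^ 2| ≤ 1 / ((m : ℝ) + 1) ^ 2 := by
  have hb := alt_bound antitone_inv_succ_sq (fun n => by positivity) tendsto_S2 m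
  have heq : ∑ k ∈ Finset.Icc 1 m, (-1) ^ k / (k : ℝ) ^ 2
      = -∑ i ∈ Finset.range m, (-1) ^ i * (1 / ((i : ℝ) + 1) ^ 2) := by
    rw [sum_Icc_one, ← Finset.sum_neg_distrib]
    apply Finset.sum_congr rfl
    intro i _
    push_cast
    rw [pow_succ]
    ring
  rw [heq, ← sub_eq_add_neg]
  exact hb

lemma tendsto_Q :
    Tendsto (fun m : ℕ => ∑ k ∈ Finset.Icc 1 m, (-1) ^ k / (k : ℝ)) atTop
      (nhds (-Real.log 2)) := by
  have heq : ∀ m : ℕ, ∑ k ∈ Finset.Icc 1 m, (-1) ^ k / (k : ℝ)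
      = -∑ i ∈ Finset.range m, (-1) ^ i * (1 / ((i : ℝ) + 1)) := by
    intro m
    rw [sum_Icc_one, ← Finset.sum_neg_distrib]
    apply Finset.sum_congr rfl
    intro i _
    push_cast
    rw [pow_succ]
    ring
  simp only [heq]
  exact tendsto_alt_harmonic.neg

lemma tendsto_W :
    Tendsto (fun m : ℕ => ∑ k ∈ Finset.Icc 1 m, (1 - (-1) ^ k) / (k : ℝ) ^ 3) atTop
      (nhds (7 * zeta3 / 4)) := by
  have hT := hasSum_W.tendsto_sum_nat
  have hT1 : Tendsto (fun n : ℕ =>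
      ∑ i ∈ Finset.range (n + 1), (1 - (-1) ^ i) / ((i : ℝ)) ^ 3) atTop
      (nhds (7 * zeta3 / 4)) := hT.comp (tendsto_add_atTop_nat 1)
  apply hT1.congr
  intro n
  rw [Finset.sum_range_succ']
  simp only [Nat.cast_zero]
  norm_num
  rw [sum_Icc_one]
  apply Finset.sum_congr rfl
  intro i _
  push_cast
  ring

lemma g4_nonneg (n : ℕ) : 0 ≤ (1 - (-1 : ℝ) ^ n) / (n : ℝ) ^ 4 := by
  apply div_nonneg _ (by positivity)
  rcases Nat.even_or_odd n with he | ho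
  · rw [he.neg_one_pow]; norm_num
  · rw [ho.neg_one_pow]; norm_num

lemma g4_num_le (n : ℕ) : (1 - (-1 : ℝ) ^ n) ≤ 2 := by
  rcases Nat.even_or_odd n with he | ho
  · rw [he.neg_one_pow]; norm_num
  · rw [ho.neg_one_pow]; norm_num

lemma R_bound (m : ℕ) :
    0 ≤ π ^ 4 / 48 - ∑ k ∈ Finset.Icc 1 m, (1 - (-1) ^ k) / (k : ℝ) ^ 4 ∧
    π ^ 4 / 48 - ∑ k ∈ Finset.Icc 1 m, (1 - (-1) ^ k) / (k : ℝ) ^ 4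
      ≤ (π ^ 2 / 3) * (1 / ((m : ℝ) + 1) ^ 2) := by
  have hsum := hasSum_R.summable
  have hpart : ∑ k ∈ Finset.Icc 1 m, (1 - (-1) ^ k) / (k : ℝ) ^ 4
      = ∑ i ∈ Finset.range (m + 1), (1 - (-1) ^ i) / (i : ℝ) ^ 4 := by
    rw [Finset.sum_range_succ']
    simp only [Nat.cast_zero]
    norm_num
    rw [sum_Icc_one]
    apply Finset.sum_congr rfl
    intro i _
    push_cast
    ring
  have htail := Summable.sum_add_tsum_nat_add (f := fun n : ℕ => (1 - (-1 : ℝ) ^ n) / (n : ℝ) ^ 4)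
    (m + 1) hsum
  rw [hasSum_R.tsum_eq] at htail
  have htail' : π ^ 4 / 48 - ∑ k ∈ Finset.Icc 1 m, (1 - (-1) ^ k) / (k : ℝ) ^ 4
      = ∑' i : ℕ, (1 - (-1 : ℝ) ^ (i + (m + 1))) / ((i + (m + 1) : ℕ) : ℝ) ^ 4 := by
    rw [hpart, ← htail]
    ring
  rw [htail']
  have hsum_shift : Summable (fun i : ℕ => (1 - (-1 : ℝ) ^ (i + (m + 1))) / ((i + (m + 1) : ℕ) : ℝ) ^ 4) := by
    exact (summable_nat_add_iff (f := fun n : ℕ => (1 - (-1 : ℝ) ^ n) / (n : ℝ) ^ 4) (m + 1)).mpr hsum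
  constructor
  · exact tsum_nonneg fun i => g4_nonneg _
  · have hle : ∀ i : ℕ, (1 - (-1 : ℝ) ^ (i + (m + 1))) / ((i + (m + 1) : ℕ) : ℝ) ^ 4
        ≤ (2 / ((m : ℝ) + 1) ^ 2) * (1 / ((i : ℝ) + 1) ^ 2) := by
      intro i
      have h1 : ((i + (m + 1) : ℕ) : ℝ) ^ 4 ≥ ((m : ℝ) + 1) ^ 2 * ((i : ℝ) + 1) ^ 2 := by
        push_cast
        have hx : (0 : ℝ) ≤ (i : ℝ) := by positivity
        have hy : (0 : ℝ) ≤ (m : ℝ) := by positivity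
        have hA : ((m : ℝ) + 1) ^ 2 ≤ ((i : ℝ) + ((m : ℝ) + 1)) ^ 2 := by nlinarith
        have hB : ((i : ℝ) + 1) ^ 2 ≤ ((i : ℝ) + ((m : ℝ) + 1)) ^ 2 := by nlinarith
        nlinarith [mul_le_mul hA hB (by positivity : (0 : ℝ) ≤ ((i : ℝ) + 1) ^ 2)
          (by positivity : (0 : ℝ) ≤ ((i : ℝ) + ((m : ℝ) + 1)) ^ 2)]
      have h2 : (0 : ℝ) < ((m : ℝ) + 1) ^ 2 * ((i : ℝ) + 1) ^ 2 := by positivity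
      calc (1 - (-1 : ℝ) ^ (i + (m + 1))) / ((i + (m + 1) : ℕ) : ℝ) ^ 4
          ≤ 2 / (((m : ℝ) + 1) ^ 2 * ((i : ℝ) + 1) ^ 2) := by
            apply div_le_div₀ (by norm_num) (g4_num_le _) h2 h1
        _ = (2 / ((m : ℝ) + 1) ^ 2) * (1 / ((i : ℝ) + 1) ^ 2) := by
            rw [div_mul_div_comm]; norm_num
    have hs2 : Summable (fun i : ℕ => (2 / ((m : ℝ) + 1) ^ 2) * (1 / ((i : ℝ) + 1) ^ 2)) :=
      hasSum_zeta2_shift.summable.mul_left _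
    calc ∑' i : ℕ, (1 - (-1 : ℝ) ^ (i + (m + 1))) / ((i + (m + 1) : ℕ) : ℝ) ^ 4
        ≤ ∑' i : ℕ, (2 / ((m : ℝ) + 1) ^ 2) * (1 / ((i : ℝ) + 1) ^ 2) :=
          Summable.tsum_le_tsum hle hsum_shift hs2
      _ = (2 / ((m : ℝ) + 1) ^ 2) * (π ^ 2 / 6) := (hasSum_zeta2_shift.mul_left _).tsum_eq
      _ = (π ^ 2 / 3) * (1 / ((m : ℝ) + 1) ^ 2) := by ring

lemma tendsto_TP :
    Tendsto (fun m : ℕ => ((m : ℝ) + 1) *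
      (π ^ 2 / 12 + ∑ k ∈ Finset.Icc 1 m, (-1) ^ k / (k : ℝ) ^ 2)) atTop (nhds 0) := by
  have hb : ∀ m : ℕ, |((m : ℝ) + 1) *
      (π ^ 2 / 12 + ∑ k ∈ Finset.Icc 1 m, (-1) ^ k / (k : ℝ) ^ 2)| ≤ 1 / ((m : ℝ) + 1) := by
    intro m
    rw [abs_mul, abs_of_nonneg (by positivity : (0 : ℝ) ≤ (m : ℝ) + 1)]
    calc ((m : ℝ) + 1) * |π ^ 2 / 12 + ∑ k ∈ Finset.Icc 1 m, (-1) ^ k / (k : ℝ) ^ 2|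
        ≤ ((m : ℝ) + 1) * (1 / ((m : ℝ) + 1) ^ 2) := by
          apply mul_le_mul_of_nonneg_left (P_bound m) (by positivity)
      _ = 1 / ((m : ℝ) + 1) := by
          have h0 : ((m : ℝ) + 1) ≠ 0 := by positivity
          field_simp
  have h1 : Tendsto (fun m : ℕ => -(1 / ((m : ℝ) + 1))) atTop (nhds 0) := by
    simpa using tendsto_inv_succ.neg
  apply tendsto_of_tendsto_of_tendsto_of_le_of_le h1 tendsto_inv_succ
  · intro m; exact (abs_le.mp (hb m)).1
  · intro m; exact (abs_le.mp (hb m)).2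

lemma tendsto_TR :
    Tendsto (fun m : ℕ => ((m : ℝ) + 1) *
      (π ^ 4 / 48 - ∑ k ∈ Finset.Icc 1 m, (1 - (-1) ^ k) / (k : ℝ) ^ 4)) atTop (nhds 0) := by
  have hup : Tendsto (fun m : ℕ => (π ^ 2 / 3) * (1 / ((m : ℝ) + 1))) atTop (nhds 0) := by
    simpa using tendsto_inv_succ.const_mul (π ^ 2 / 3)
  apply tendsto_of_tendsto_of_tendsto_of_le_of_le tendsto_const_nhds hup
  · intro m
    exact mul_nonneg (by positivity) (R_bound m).1
  · intro m
    calc ((m : ℝ) + 1) * (π ^ 4 / 48 - ∑ k ∈ Finset.Icc 1 m, (1 - (-1) ^ k) / (k : ℝ) ^ 4)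
        ≤ ((m : ℝ) + 1) * ((π ^ 2 / 3) * (1 / ((m : ℝ) + 1) ^ 2)) := by
          apply mul_le_mul_of_nonneg_left (R_bound m).2 (by positivity)
      _ = (π ^ 2 / 3) * (1 / ((m : ℝ) + 1)) := by
          have h0 : ((m : ℝ) + 1) ≠ 0 := by positivity
          field_simp

lemma hasSum_zeta3_shift : HasSum (fun n : ℕ => 1 / ((n : ℝ) + 1) ^ 3) zeta3 := by
  have h : HasSum (fun n : ℕ => 1 / ((n + 1 : ℕ) : ℝ) ^ 3) zeta3 := by
    apply (hasSum_nat_add_iff (f := fun n : ℕ => 1 / (n : ℝ) ^ 3) 1).mpr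
    simpa using hasSum_zeta3
  have hfun : (fun n : ℕ => 1 / ((n + 1 : ℕ) : ℝ) ^ 3) = fun n : ℕ => 1 / ((n : ℝ) + 1) ^ 3 := by
    funext n; push_cast; ring
  rwa [hfun] at h

lemma zeta3_le : zeta3 ≤ π ^ 2 / 6 := by
  apply hasSum_le _ hasSum_zeta3_shift hasSum_zeta2_shift
  intro n
  apply one_div_le_one_div_of_le (by positivity)
  have h1 : (1 : ℝ) ≤ (n : ℝ) + 1 := by
    have : (0 : ℝ) ≤ (n : ℝ) := Nat.cast_nonneg n
    linarith
  calc ((n : ℝ) + 1) ^ 2 = ((n : ℝ) + 1) ^ 2 * 1 := by ring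
    _ ≤ ((n : ℝ) + 1) ^ 2 * ((n : ℝ) + 1) := by nlinarith
    _ = ((n : ℝ) + 1) ^ 3 := by ring

theorem fejerKernel_moment_ratio :
    0 < 4 * Real.log 2 / (6 * Real.pi * Real.log 2 - 21 * zeta3 / Real.pi) ∧
    Tendsto (fun m : ℕ =>
        (∫ y in (-Real.pi)..Real.pi, y ^ 2 * fejerKernel m y) /
          (∫ y in (-Real.pi)..Real.pi, |y| ^ 3 * fejerKernel m y))
      atTop
      (nhds (4 * Real.log 2 / (6 * Real.pi * Real.log 2 - 21 * zeta3 / Real.pi))) := by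
  have hπ := Real.pi_pos
  have hπ0 := Real.pi_ne_zero
  have hlog := Real.log_two_gt_d9
  have hdiv : 21 * zeta3 / π ≤ 3.5 * π := by
    rw [div_le_iff₀ hπ]
    nlinarith [zeta3_le, hπ]
  have hml : π * 0.6931471803 < π * Real.log 2 := mul_lt_mul_of_pos_left hlog hπ
  have hD : 0 < 6 * π * Real.log 2 - 21 * zeta3 / π := by nlinarith
  have hnum4 : (0 : ℝ) < 4 * Real.log 2 := by nlinarith
  refine ⟨div_pos hnum4 hD, ?_⟩
  -- closed forms with the (m+1) factor
  have hnumEq : ∀ m : ℕ, ((m : ℝ) + 1) * (∫ y in (-π)..π, y ^ 2 * fejerKernel m y)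
      = 4 * (((m : ℝ) + 1) * (π ^ 2 / 12 + ∑ k ∈ Finset.Icc 1 m, (-1) ^ k / (k : ℝ) ^ 2))
        - 4 * (∑ k ∈ Finset.Icc 1 m, (-1) ^ k / (k : ℝ)) := by
    intro m
    rw [a_eq m]
    have hm1 : ((m : ℝ) + 1) ≠ 0 := by positivity
    have hsplit : ∑ k ∈ Finset.Icc 1 m, (1 - (k : ℝ) / (m + 1)) * (4 * (-1) ^ k / (k : ℝ) ^ 2)
        = ∑ k ∈ Finset.Icc 1 m,
            (4 * ((-1) ^ k / (k : ℝ) ^ 2) - (4 * ((-1) ^ k / (k : ℝ))) / ((m : ℝ) + 1)) := by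
      apply Finset.sum_congr rfl
      intro k hk
      rw [Finset.mem_Icc] at hk
      have hk0 : (k : ℝ) ≠ 0 := Nat.cast_ne_zero.mpr (by omega)
      field_simp
    rw [hsplit, Finset.sum_sub_distrib, ← Finset.mul_sum, ← Finset.sum_div, ← Finset.mul_sum]
    field_simp
    ring
  have hdenEq : ∀ m : ℕ, ((m : ℝ) + 1) * (∫ y in (-π)..π, |y| ^ 3 * fejerKernel m y)
      = 6 * π * (((m : ℝ) + 1) * (π ^ 2 / 12 + ∑ k ∈ Finset.Icc 1 m, (-1) ^ k / (k : ℝ) ^ 2))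
        - (12 / π) * (((m : ℝ) + 1) *
            (π ^ 4 / 48 - ∑ k ∈ Finset.Icc 1 m, (1 - (-1) ^ k) / (k : ℝ) ^ 4))
        - (6 * π * (∑ k ∈ Finset.Icc 1 m, (-1) ^ k / (k : ℝ))
            + (12 / π) * (∑ k ∈ Finset.Icc 1 m, (1 - (-1) ^ k) / (k : ℝ) ^ 3)) := by
    intro m
    rw [b_eq m]
    have hm1 : ((m : ℝ) + 1) ≠ 0 := by positivity
    have hsplit : ∑ k ∈ Finset.Icc 1 m, (1 - (k : ℝ) / (m + 1)) *
          (6 * π * (-1) ^ k / k ^ 2 + (12 / π) * (1 - (-1) ^ k) / k ^ 4)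
        = ∑ k ∈ Finset.Icc 1 m,
            ((6 * π * ((-1) ^ k / (k : ℝ) ^ 2) + (12 / π) * ((1 - (-1) ^ k) / (k : ℝ) ^ 4))
              - (6 * π * ((-1) ^ k / (k : ℝ)) + (12 / π) * ((1 - (-1) ^ k) / (k : ℝ) ^ 3))
                  / ((m : ℝ) + 1)) := by
      apply Finset.sum_congr rfl
      intro k hk
      rw [Finset.mem_Icc] at hk
      have hk0 : (k : ℝ) ≠ 0 := Nat.cast_ne_zero.mpr (by omega)
      field_simp
    rw [hsplit, Finset.sum_sub_distrib, Finset.sum_add_distrib, ← Finset.sum_div,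
      Finset.sum_add_distrib, ← Finset.mul_sum, ← Finset.mul_sum, ← Finset.mul_sum,
      ← Finset.mul_sum]
    field_simp
    ring
  have hNum : Tendsto (fun m : ℕ =>
      ((m : ℝ) + 1) * (∫ y in (-π)..π, y ^ 2 * fejerKernel m y)) atTop
      (nhds (4 * Real.log 2)) := by
    have h := (tendsto_TP.const_mul 4).sub (tendsto_Q.const_mul 4)
    rw [show (4 : ℝ) * 0 - 4 * (-Real.log 2) = 4 * Real.log 2 by ring] at h
    exact h.congr fun m => (hnumEq m).symm
  have hDen : Tendsto (fun m : ℕ =>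
      ((m : ℝ) + 1) * (∫ y in (-π)..π, |y| ^ 3 * fejerKernel m y)) atTop
      (nhds (6 * π * Real.log 2 - 21 * zeta3 / π)) := by
    have h := ((tendsto_TP.const_mul (6 * π)).sub (tendsto_TR.const_mul (12 / π))).sub
      ((tendsto_Q.const_mul (6 * π)).add (tendsto_W.const_mul (12 / π)))
    rw [show (6 * π * (0 : ℝ) - 12 / π * 0) - (6 * π * (-Real.log 2) + 12 / π * (7 * zeta3 / 4))
        = 6 * π * Real.log 2 - 21 * zeta3 / π by field_simp; ring] at h
    exact h.congr fun m => (hdenEq m).symm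
  have hfinal := hNum.div hDen hD.ne'
  apply hfinal.congr
  intro m
  have hm1 : ((m : ℝ) + 1) ≠ 0 := by positivity
  exact mul_div_mul_left _ _ hm1
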